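/- Let C be a shortest odd hole of a simple graph G, and let v ∈ V(G) be a C-major vertex with at most three neighbours in V(C). Then v has exactly three neighbours in V(C), and exactly one pair of these three neighbours is adjacent. -/

import Mathlib

open SimpleGraph

namespace SOH

variable {V : Type*}

/-- A walk is "induced" if every edge of `G` between vertices of the walk is an edge
of the walk. -/
def IsInducedWalk (G : SimpleGraph V) {u v : V} (P : G.Walk u v) : Prop :=
  ∀ x y : V, x ∈ P.support → y ∈ P.support → G.Adj x y → P.toSubgraph.Adj x y

/-- The interior of a path: its vertices other than the two ends. -/
def interior (G : SimpleGraph V) {u v : V} (P : G.Walk u v) : Set V :=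
  {x | x ∈ P.support} \ {u, v}

/-- A hole: an induced cycle of length at least 4. -/
def IsHole (G : SimpleGraph V) {u : V} (c : G.Walk u u) : Prop :=
  c.IsCycle ∧ 4 ≤ c.length ∧ IsInducedWalk G c

/-- An odd hole: a hole of odd length. -/
def IsOddHole (G : SimpleGraph V) {u : V} (c : G.Walk u u) : Prop :=
  IsHole G c ∧ Odd c.length

/-- A shortest odd hole: an odd hole of minimum length among all odd holes of `G`. -/
def IsShortestOddHole (G : SimpleGraph V) {u : V} (c : G.Walk u u) : Prop :=
  IsOddHole G c ∧ ∀ (w : V) (d : G.Walk w w), IsOddHole G d → c.length ≤ d.length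

/-- A vertex `v` is `C`-major if there is no three-vertex path of `C` containing all
neighbours of `v` in `V(C)`. -/
def CMajor (G : SimpleGraph V) {u : V} (c : G.Walk u u) (v : V) : Prop :=
  ¬ ∃ x y z : V, c.toSubgraph.Adj x y ∧ c.toSubgraph.Adj y z ∧ x ≠ z ∧
      ∀ w ∈ c.support, G.Adj v w → (w = x ∨ w = y ∨ w = z)

/-- A big `C`-major vertex: a `C`-major vertex with at least four neighbours in `V(C)`. -/
def BigCMajor (G : SimpleGraph V) {u : V} (c : G.Walk u u) (v : V) : Prop :=
  CMajor G c v ∧ 4 ≤ {w | w ∈ c.support ∧ G.Adj v w}.ncard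

/-- A hole `c` is jewelled. -/
def Jewelled (G : SimpleGraph V) {u : V} (c : G.Walk u u) : Prop :=
  (∃ c1 c2 c4 c5 c3 : V, ([c1, c2, c4, c5] : List V).Nodup ∧
      c.toSubgraph.Adj c1 c2 ∧ c.toSubgraph.Adj c2 c4 ∧ c.toSubgraph.Adj c4 c5 ∧
      G.Adj c3 c1 ∧ G.Adj c3 c5) ∨
  (∃ c1 c3 c5 c2 c4 : V, ([c1, c3, c5] : List V).Nodup ∧
      c.toSubgraph.Adj c1 c3 ∧ c.toSubgraph.Adj c3 c5 ∧
      c2 ∉ c.support ∧ c4 ∉ c.support ∧ c2 ≠ c4 ∧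
      G.Adj c1 c2 ∧ G.Adj c2 c4 ∧ G.Adj c4 c5 ∧
      ¬ G.Adj c1 c4 ∧ ¬ G.Adj c2 c5 ∧ ¬ G.Adj c1 c5)

/-- A pyramid in `G`, with apex `apex`, base `{b1, b2, b3}` and constituent paths
`P1, P2, P3`. -/
structure Pyramid (G : SimpleGraph V) where
  apex : V
  b1 : V
  b2 : V
  b3 : V
  P1 : G.Walk apex b1
  P2 : G.Walk apex b2
  P3 : G.Walk apex b3
  distinct : ([apex, b1, b2, b3] : List V).Nodup
  isPath1 : P1.IsPath
  isPath2 : P2.IsPath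
  isPath3 : P3.IsPath
  induced1 : IsInducedWalk G P1
  induced2 : IsInducedWalk G P2
  induced3 : IsInducedWalk G P3
  adj12 : G.Adj b1 b2
  adj13 : G.Adj b1 b3
  adj23 : G.Adj b2 b3
  twoLong : (2 ≤ P1.length ∧ 2 ≤ P2.length) ∨ (2 ≤ P1.length ∧ 2 ≤ P3.length) ∨
      (2 ≤ P2.length ∧ 2 ≤ P3.length)
  disj12 : {x | x ∈ P1.support} ∩ {x | x ∈ P2.support} = {apex}
  disj13 : {x | x ∈ P1.support} ∩ {x | x ∈ P3.support} = {apex}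
  disj23 : {x | x ∈ P2.support} ∩ {x | x ∈ P3.support} = {apex}
  edges12 : ∀ x y : V, x ∈ P1.support → y ∈ P2.support → x ≠ apex → y ≠ apex →
      G.Adj x y → x = b1 ∧ y = b2
  edges13 : ∀ x y : V, x ∈ P1.support → y ∈ P3.support → x ≠ apex → y ≠ apex →
      G.Adj x y → x = b1 ∧ y = b3
  edges23 : ∀ x y : V, x ∈ P2.support → y ∈ P3.support → x ≠ apex → y ≠ apex →
      G.Adj x y → x = b2 ∧ y = b3

/-- The vertex set of a pyramid. -/
def Pyramid.verts {G : SimpleGraph V} (H : Pyramid G) : Set V :=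
  {x | x ∈ H.P1.support} ∪ {x | x ∈ H.P2.support} ∪ {x | x ∈ H.P3.support}

/-- The closed walk `apex-P1-b1-b2-P2-apex` associated with a pyramid. -/
def Pyramid.hole {G : SimpleGraph V} (H : Pyramid G) : G.Walk H.apex H.apex :=
  H.P1.append (Walk.cons H.adj12 H.P2.reverse)

/-- A great pyramid: the hole `apex-P1-b1-b2-P2-apex` is a shortest odd hole and `P3` is
strictly shorter than `P1` and `P2`. -/
structure GreatPyramid (G : SimpleGraph V) extends Pyramid G where
  holeShortest : IsShortestOddHole G toPyramid.hole
  short31 : toPyramid.P3.length < toPyramid.P1.length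
  short32 : toPyramid.P3.length < toPyramid.P2.length

/-- The heart of a great pyramid: `V(P3) \ {apex}`. -/
def GreatPyramid.heart {G : SimpleGraph V} (H : GreatPyramid G) : Set V :=
  {x | x ∈ H.P3.support} \ {H.apex}

/-- An optimal great pyramid: one of minimum height (= length of `P3`). -/
def GreatPyramid.Optimal {G : SimpleGraph V} (H : GreatPyramid G) : Prop :=
  ∀ H' : GreatPyramid G, H.P3.length ≤ H'.P3.length

/-- `L1, L2` are the two subpaths of the cycle `c` joining `u` and `v`. -/
def IsSplit (G : SimpleGraph V) {w u v : V} (c : G.Walk w w) (L1 L2 : G.Walk u v) : Prop :=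
  L1.IsPath ∧ L2.IsPath ∧
  {x | x ∈ L1.support} ∩ {x | x ∈ L2.support} = {u, v} ∧
  {x | x ∈ L1.support} ∪ {x | x ∈ L2.support} = {x | x ∈ c.support} ∧
  (∀ e ∈ L1.edges, e ∈ c.edges) ∧ (∀ e ∈ L2.edges, e ∈ c.edges) ∧
  L1.length + L2.length = c.length

/-- A shortcut for a (shortest odd) hole `c`: a path joining two distinct nonadjacent
vertices of `c`, shorter than both arcs of `c` between them, containing no big
`c`-major vertex. -/
def IsShortcut (G : SimpleGraph V) {w u v : V} (c : G.Walk w w) (P : G.Walk u v) : Prop :=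
  u ∈ c.support ∧ v ∈ c.support ∧ u ≠ v ∧ ¬ G.Adj u v ∧ P.IsPath ∧
  (∀ L1 L2 : G.Walk u v, IsSplit G c L1 L2 → P.length < min L1.length L2.length) ∧
  ∀ x ∈ P.support, ¬ BigCMajor G c x



section Helpers

lemma adj_ts {G : SimpleGraph V} {a b x y : V} {p : G.Walk a b} :
    p.toSubgraph.Adj x y ↔ s(x, y) ∈ p.edges := by
  rw [← SimpleGraph.Subgraph.mem_edgeSet, Walk.mem_edges_toSubgraph]

lemma edge_start {G : SimpleGraph V} {x y a b : V} {p : G.Walk x y} (hp : p.IsPath)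
    (ha : s(x, a) ∈ p.edges) (hb : s(x, b) ∈ p.edges) : a = b := by
  induction p with
  | nil => simp at ha
  | @cons u w y h q ih =>
    rw [Walk.cons_isPath_iff] at hp
    rw [Walk.edges_cons, List.mem_cons] at ha hb
    have key : ∀ t : V, s(u, t) = s(u, w) ∨ s(u, t) ∈ q.edges → t = w := by
      intro t ht
      rcases ht with ht | ht
      · exact Sym2.congr_right.mp ht
      · exact absurd (q.fst_mem_support_of_mem_edges ht) hp.2
    rw [key a ha, key b hb]

lemma path_edge_end {G : SimpleGraph V} {x y : V} {p : G.Walk x y} (hp : p.IsPath)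
    (he : s(x, y) ∈ p.edges) : p.length = 1 := by
  induction p with
  | nil => simp at he
  | @cons u w y h q ih =>
    rw [Walk.cons_isPath_iff] at hp
    rw [Walk.edges_cons, List.mem_cons] at he
    rcases he with he | he
    · have : y = w := Sym2.congr_right.mp he
      subst this
      rw [Walk.isPath_iff_eq_nil.mp hp.1]
      simp
    · exact absurd (q.fst_mem_support_of_mem_edges he) hp.2

lemma path_split_inter {G : SimpleGraph V} [DecidableEq V] {a b z w : V} {q : G.Walk a b}
    (hq : q.IsPath) (hz : z ∈ q.support) (h1 : w ∈ (q.takeUntil z hz).support)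
    (h2 : w ∈ (q.dropUntil z hz).support) : w = z := by
  have hs : q.support = (q.takeUntil z hz).support ++ (q.dropUntil z hz).support.tail := by
    rw [← Walk.support_append, Walk.take_spec]
  have hnd := hq.support_nodup
  rw [hs, List.nodup_append'] at hnd
  rw [Walk.support_eq_cons, List.mem_cons] at h2
  rcases h2 with h2 | h2
  · exact h2
  · exact absurd h2 (hnd.2.2 h1)

lemma cycle_rot {G : SimpleGraph V} [DecidableEq V] {u x : V} {c : G.Walk u u}
    (hcyc : c.IsCycle) (hx : x ∈ c.support) :
    ∃ (w0 : V) (hadj : G.Adj x w0) (q0 : G.Walk w0 x),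
      q0.IsPath ∧ s(x, w0) ∉ q0.edges ∧
      (∀ e, e ∈ c.edges ↔ e = s(x, w0) ∨ e ∈ q0.edges) ∧
      (∀ w, w ∈ c.support ↔ w = x ∨ w ∈ q0.support) ∧
      c.length = q0.length + 1 := by
  have hcyc' := hcyc.rotate hx
  have hts := c.toSubgraph_rotate hx
  have hperm := (c.rotate_edges x hx).perm
  have hlen : (c.rotate x hx).length = c.length := by
    rw [Walk.rotate, Walk.length_append, Nat.add_comm, ← Walk.length_append, Walk.take_spec]
  cases hr : c.rotate x hx with
  | nil =>
    rw [hr] at hcyc'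
    exact absurd rfl hcyc'.ne_nil
  | @cons _ w0 _ hadj q0 =>
    rw [hr] at hcyc' hts hperm hlen
    obtain ⟨hq0, hne⟩ := (Walk.cons_isCycle_iff q0 hadj).mp hcyc'
    refine ⟨w0, hadj, q0, hq0, hne, ?_, ?_, ?_⟩
    · intro e
      rw [← hperm.mem_iff, Walk.edges_cons, List.mem_cons]
    · intro w
      rw [← c.mem_verts_toSubgraph, ← hts, Walk.mem_verts_toSubgraph, Walk.support_cons,
        List.mem_cons]
    · rw [← hlen, Walk.length_cons, Nat.add_comm]

lemma cycle_nbrs_eq {G : SimpleGraph V} {u x : V} {c : G.Walk u u}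
    (hcyc : c.IsCycle) (hx : x ∈ c.support) :
    ∃ p q : V, p ≠ q ∧ c.toSubgraph.Adj x p ∧ c.toSubgraph.Adj x q ∧
      ∀ w, c.toSubgraph.Adj x w → w = p ∨ w = q := by
  classical
  obtain ⟨w0, hadj, q0, hq0, hne, hed, _, hlen⟩ := cycle_rot hcyc hx
  have hq0len : 2 ≤ q0.length := by
    have := hcyc.three_le_length
    omega
  cases hrev : q0.reverse with
  | nil =>
    have : q0.length = 0 := by
      have := q0.length_reverse
      rw [hrev] at this
      simpa using this.symm
    omega
  | @cons _ w1 _ hadj2 q2 =>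
    have hmem1 : s(x, w1) ∈ q0.edges := by
      have : s(x, w1) ∈ q0.reverse.edges := by rw [hrev]; exact List.mem_cons_self
      rwa [Walk.edges_reverse, List.mem_reverse] at this
    refine ⟨w0, w1, ?_, adj_ts.mpr ((hed _).mpr (Or.inl rfl)),
      adj_ts.mpr ((hed _).mpr (Or.inr hmem1)), ?_⟩
    · rintro rfl
      exact hne hmem1
    · intro w hw
      have hw' := (hed _).mp (adj_ts.mp hw)
      rcases hw' with hw' | hw'
      · left
        rcases Sym2.eq_iff.mp hw' with ⟨-, h⟩ | ⟨h1, -⟩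
        · exact h
        · exact absurd h1 hadj.ne
      · right
        have hproof : s(x, w) ∈ q0.reverse.edges := by
          rw [Walk.edges_reverse, List.mem_reverse]; exact hw'
        have hhead : s(x, w1) ∈ q0.reverse.edges := by
          rw [hrev]; exact List.mem_cons_self
        exact edge_start hq0.reverse hproof hhead


lemma cycle_two_arcs {G : SimpleGraph V} {u x z : V} {c : G.Walk u u} (hcyc : c.IsCycle)
    (hx : x ∈ c.support) (hz : z ∈ c.support) (hxz : x ≠ z) :
    ∃ (P : G.Walk x z) (Q : G.Walk z x),
      P.IsPath ∧ Q.IsPath ∧ P.length + Q.length = c.length ∧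
      (∀ e, e ∈ c.edges ↔ e ∈ P.edges ∨ e ∈ Q.edges) ∧
      (∀ w, w ∈ c.support ↔ w ∈ P.support ∨ w ∈ Q.support) ∧
      (∀ w, w ∈ P.support → w ∈ Q.support → w = x ∨ w = z) := by
  classical
  obtain ⟨w0, hadj, q0, hq0, hne, hed, hsup, hlen⟩ := cycle_rot hcyc hx
  have hz0 : z ∈ q0.support := by
    rcases (hsup z).mp hz with h | h
    · exact absurd h.symm hxz
    · exact h
  have hxend : x ∈ (q0.dropUntil z hz0).support := Walk.end_mem_support _
  have hxtU : x ∉ (q0.takeUntil z hz0).support := by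
    intro h
    exact hxz (path_split_inter hq0 hz0 h hxend)
  have hq0spec : (q0.takeUntil z hz0).append (q0.dropUntil z hz0) = q0 := q0.take_spec hz0
  refine ⟨Walk.cons hadj (q0.takeUntil z hz0), q0.dropUntil z hz0,
    (hq0.takeUntil hz0).cons hxtU, hq0.dropUntil hz0, ?_, ?_, ?_, ?_⟩
  · have := congrArg Walk.length hq0spec
    rw [Walk.length_append] at this
    rw [Walk.length_cons]
    omega
  · intro e
    have hq0ed : q0.edges = (q0.takeUntil z hz0).edges ++ (q0.dropUntil z hz0).edges := by
      rw [← Walk.edges_append, hq0spec]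
    rw [hed e, Walk.edges_cons, List.mem_cons, hq0ed, List.mem_append]
    tauto
  · intro w
    have hq0sup : q0.support = (q0.takeUntil z hz0).support ++
        (q0.dropUntil z hz0).support.tail := by
      rw [← Walk.support_append, hq0spec]
    have hdUm : w ∈ (q0.dropUntil z hz0).support ↔
        w = z ∨ w ∈ (q0.dropUntil z hz0).support.tail := by
      conv_lhs => rw [Walk.support_eq_cons]
      exact List.mem_cons
    have hzend : z ∈ (q0.takeUntil z hz0).support := Walk.end_mem_support _
    rw [hsup w, Walk.support_cons, List.mem_cons, hq0sup, List.mem_append, hdUm]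
    constructor
    · rintro (h | h | h)
      · exact Or.inl (Or.inl h)
      · exact Or.inl (Or.inr h)
      · exact Or.inr (Or.inr h)
    · rintro ((h | h) | h | h)
      · exact Or.inl h
      · exact Or.inr (Or.inl h)
      · exact Or.inr (Or.inl (by rw [h]; exact hzend))
      · exact Or.inr (Or.inr h)
  · intro w hwP hwQ
    rw [Walk.support_cons, List.mem_cons] at hwP
    rcases hwP with h | h
    · exact Or.inl h
    · exact Or.inr (path_split_inter hq0 hz0 h hwQ)

lemma path_three_split {G : SimpleGraph V} {w0 x b d : V} {q0 : G.Walk w0 x}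
    (hq0 : q0.IsPath) (B1 : G.Walk w0 b) (B2 : G.Walk b d) (B3 : G.Walk d x)
    (hsplit : B1.append (B2.append B3) = q0) (hbd : b ≠ d) (hbx : b ≠ x) (hdx : d ≠ x) :
    B1.IsPath ∧ B2.IsPath ∧ B3.IsPath ∧
    B1.length + B2.length + B3.length = q0.length ∧
    (∀ e, e ∈ q0.edges ↔ e ∈ B1.edges ∨ e ∈ B2.edges ∨ e ∈ B3.edges) ∧
    (∀ w, w ∈ q0.support ↔ w ∈ B1.support ∨ w ∈ B2.support ∨ w ∈ B3.support) ∧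
    (∀ w, w ∈ B1.support → w ∈ B2.support → w = b) ∧
    (∀ w, w ∈ B2.support → w ∈ B3.support → w = d) ∧
    (∀ w, w ∈ B1.support → w ∈ B3.support → False) ∧
    x ∉ B1.support ∧ x ∉ B2.support := by
  subst hsplit
  have hB23 : (B2.append B3).IsPath := hq0.of_append_right
  have hB1 : B1.IsPath := hq0.of_append_left
  have hB2 : B2.IsPath := hB23.of_append_left
  have hB3 : B3.IsPath := hB23.of_append_right
  have hsupp : (B1.append (B2.append B3)).support =
      B1.support ++ (B2.support.tail ++ B3.support.tail) := by
    rw [Walk.support_append, Walk.support_append,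
      List.tail_append_of_ne_nil (Walk.support_ne_nil _)]
  have hnd := hq0.support_nodup
  rw [hsupp, List.nodup_append'] at hnd
  have hdisj1 := hnd.2.2
  have hdisj23 : B2.support.tail.Disjoint B3.support.tail := (List.nodup_append'.mp hnd.2.1).2.2
  have hI12 : ∀ w, w ∈ B1.support → w ∈ B2.support → w = b := by
    intro w h1 h2
    rcases List.mem_cons.mp ((Walk.support_eq_cons B2) ▸ h2 : w ∈ b :: B2.support.tail) with
      h | h
    · exact h
    · exact absurd (List.mem_append_left _ h) (hdisj1 h1)
  have hI23 : ∀ w, w ∈ B2.support → w ∈ B3.support → w = d := by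
    intro w h2 h3
    rcases List.mem_cons.mp ((Walk.support_eq_cons B3) ▸ h3 : w ∈ d :: B3.support.tail) with
      h | h
    · exact h
    · rcases List.mem_cons.mp ((Walk.support_eq_cons B2) ▸ h2 : w ∈ b :: B2.support.tail) with
        h' | h'
      · subst h'
        exact absurd (List.mem_append_right _ h) (hdisj1 (Walk.end_mem_support B1))
      · exact absurd h (hdisj23 h')
  have hI13 : ∀ w, w ∈ B1.support → w ∈ B3.support → False := by
    intro w h1 h3
    rcases List.mem_cons.mp ((Walk.support_eq_cons B3) ▸ h3 : w ∈ d :: B3.support.tail) with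
      h | h
    · subst h
      exact hbd (hI12 _ h1 (Walk.end_mem_support B2)).symm
    · exact absurd (List.mem_append_right _ h) (hdisj1 h1)
  have hxB1 : x ∉ B1.support := fun h => hI13 x h (Walk.end_mem_support B3)
  have hxB2 : x ∉ B2.support := fun h => hdx (hI23 x h (Walk.end_mem_support B3)).symm
  refine ⟨hB1, hB2, hB3,
    by rw [Walk.length_append, Walk.length_append]; omega, ?_, ?_, hI12, hI23, hI13, hxB1, ?_⟩
  · intro e
    simp only [Walk.edges_append, List.mem_append, or_assoc]
  · intro w
    rw [hsupp, List.mem_append, List.mem_append]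
    constructor
    · rintro (h | h | h)
      · exact Or.inl h
      · exact Or.inr (Or.inl (List.mem_of_mem_tail h))
      · exact Or.inr (Or.inr (List.mem_of_mem_tail h))
    · rintro (h | h | h)
      · exact Or.inl h
      · rcases List.mem_cons.mp ((Walk.support_eq_cons B2) ▸ h : w ∈ b :: B2.support.tail) with
          h' | h'
        · exact Or.inl (by rw [h']; exact Walk.end_mem_support B1)
        · exact Or.inr (Or.inl h')
      · rcases List.mem_cons.mp ((Walk.support_eq_cons B3) ▸ h : w ∈ d :: B3.support.tail) with
          h' | h'
        · have hd2 : w ∈ B2.support := by rw [h']; exact Walk.end_mem_support B2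
          rcases List.mem_cons.mp ((Walk.support_eq_cons B2) ▸ hd2 :
            w ∈ b :: B2.support.tail) with h'' | h''
          · exact Or.inl (by rw [h'']; exact Walk.end_mem_support B1)
          · exact Or.inr (Or.inl h'')
        · exact Or.inr (Or.inr h')
  · exact hxB2


/-- Assemble three arcs of a cycle from a decomposition of the rotated walk. -/
lemma arcs_of_split {G : SimpleGraph V} {u x w0 b d : V} {c : G.Walk u u} {q0 : G.Walk w0 x}
    (hadj : G.Adj x w0) (hq0 : q0.IsPath)
    (B1 : G.Walk w0 b) (B2 : G.Walk b d) (B3 : G.Walk d x)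
    (hsplit : B1.append (B2.append B3) = q0)
    (hbd : b ≠ d) (hbx : b ≠ x) (hdx : d ≠ x)
    (hed : ∀ e, e ∈ c.edges ↔ e = s(x, w0) ∨ e ∈ q0.edges)
    (hsup : ∀ w, w ∈ c.support ↔ w = x ∨ w ∈ q0.support)
    (hlen : c.length = q0.length + 1) :
    ∃ (A1 : G.Walk x b) (A2 : G.Walk b d) (A3 : G.Walk d x),
      A1.IsPath ∧ A2.IsPath ∧ A3.IsPath ∧
      A1.length + A2.length + A3.length = c.length ∧
      1 ≤ A1.length ∧ 1 ≤ A2.length ∧ 1 ≤ A3.length ∧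
      (∀ e, e ∈ c.edges ↔ e ∈ A1.edges ∨ e ∈ A2.edges ∨ e ∈ A3.edges) ∧
      (∀ w ∈ A1.support, w ∈ c.support) ∧ (∀ w ∈ A2.support, w ∈ c.support) ∧
      (∀ w ∈ A3.support, w ∈ c.support) ∧
      (∀ w, w ∈ A1.support → w ∈ A2.support → w = b) ∧
      (∀ w, w ∈ A2.support → w ∈ A3.support → w = d) ∧
      (∀ w, w ∈ A1.support → w ∈ A3.support → w = x) := by
  obtain ⟨hB1, hB2, hB3, hlens, hedq, hsupq, hI12, hI23, hI13, hxB1, hxB2⟩ :=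
    path_three_split hq0 B1 B2 B3 hsplit hbd hbx hdx
  have hA2len : 1 ≤ B2.length := by
    rcases Nat.eq_zero_or_pos B2.length with h | h
    · exact absurd (Walk.eq_of_length_eq_zero h) hbd
    · exact h
  have hA3len : 1 ≤ B3.length := by
    rcases Nat.eq_zero_or_pos B3.length with h | h
    · exact absurd (Walk.eq_of_length_eq_zero h) hdx
    · exact h
  refine ⟨Walk.cons hadj B1, B2, B3, hB1.cons hxB1, hB2, hB3, ?_, ?_, hA2len, hA3len,
    ?_, ?_, ?_, ?_, ?_, hI23, ?_⟩
  · rw [Walk.length_cons]; omega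
  · rw [Walk.length_cons]; omega
  · intro e
    rw [hed e, hedq e, Walk.edges_cons, List.mem_cons]
    tauto
  · intro w hw
    rw [Walk.support_cons, List.mem_cons] at hw
    rcases hw with hw | hw
    · exact (hsup w).mpr (Or.inl hw)
    · exact (hsup w).mpr (Or.inr ((hsupq w).mpr (Or.inl hw)))
  · intro w hw
    exact (hsup w).mpr (Or.inr ((hsupq w).mpr (Or.inr (Or.inl hw))))
  · intro w hw
    exact (hsup w).mpr (Or.inr ((hsupq w).mpr (Or.inr (Or.inr hw))))
  · intro w h1 h2
    rw [Walk.support_cons, List.mem_cons] at h1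
    rcases h1 with h1 | h1
    · exact absurd (by rw [← h1]; exact h2) hxB2
    · exact hI12 w h1 h2
  · intro w h1 h3
    rw [Walk.support_cons, List.mem_cons] at h1
    rcases h1 with h1 | h1
    · exact h1
    · exact absurd (hI13 w h1 h3) (fun h => h)

/-- Split a cycle into three arcs at three given vertices (in some order). -/
lemma cycle_three_arcs {G : SimpleGraph V} {u x y z : V} {c : G.Walk u u} (hcyc : c.IsCycle)
    (hx : x ∈ c.support) (hy : y ∈ c.support) (hz : z ∈ c.support)
    (hxy : x ≠ y) (hxz : x ≠ z) (hyz : y ≠ z) :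
    ∃ (q r : V), ({x, q, r} : Set V) = {x, y, z} ∧ x ≠ q ∧ x ≠ r ∧ q ≠ r ∧
    ∃ (A1 : G.Walk x q) (A2 : G.Walk q r) (A3 : G.Walk r x),
      A1.IsPath ∧ A2.IsPath ∧ A3.IsPath ∧
      A1.length + A2.length + A3.length = c.length ∧
      1 ≤ A1.length ∧ 1 ≤ A2.length ∧ 1 ≤ A3.length ∧
      (∀ e, e ∈ c.edges ↔ e ∈ A1.edges ∨ e ∈ A2.edges ∨ e ∈ A3.edges) ∧
      (∀ w ∈ A1.support, w ∈ c.support) ∧ (∀ w ∈ A2.support, w ∈ c.support) ∧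
      (∀ w ∈ A3.support, w ∈ c.support) ∧
      (∀ w, w ∈ A1.support → w ∈ A2.support → w = q) ∧
      (∀ w, w ∈ A2.support → w ∈ A3.support → w = r) ∧
      (∀ w, w ∈ A1.support → w ∈ A3.support → w = x) := by
  classical
  obtain ⟨w0, hadj, q0, hq0, hne, hed, hsup, hlen⟩ := cycle_rot hcyc hx
  have hy0 : y ∈ q0.support := by
    rcases (hsup y).mp hy with h | h
    · exact absurd h.symm hxy
    · exact h
  have hz0 : z ∈ q0.support := by
    rcases (hsup z).mp hz with h | h
    · exact absurd h.symm hxz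
    · exact h
  by_cases hcase : y ∈ (q0.takeUntil z hz0).support
  · refine ⟨y, z, rfl, hxy, hxz, hyz, ?_⟩
    have hsplit : ((q0.takeUntil z hz0).takeUntil y hcase).append
        (((q0.takeUntil z hz0).dropUntil y hcase).append (q0.dropUntil z hz0)) = q0 := by
      rw [Walk.append_assoc, Walk.take_spec, Walk.take_spec]
    exact arcs_of_split hadj hq0 _ _ _ hsplit hyz (fun h => hxy h.symm) (fun h => hxz h.symm)
      hed hsup hlen
  · have hydrop : y ∈ (q0.dropUntil z hz0).support := by
      have : y ∈ (q0.takeUntil z hz0).support ∨ y ∈ (q0.dropUntil z hz0).support.tail := by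
        have hq0sup : q0.support = (q0.takeUntil z hz0).support ++
            (q0.dropUntil z hz0).support.tail := by
          rw [← Walk.support_append, Walk.take_spec]
        rw [hq0sup, List.mem_append] at hy0
        exact hy0
      rcases this with h | h
      · exact absurd h hcase
      · exact List.mem_of_mem_tail h
    refine ⟨z, y, ?_, hxz, hxy, fun h => hyz h.symm, ?_⟩
    · ext w
      simp only [Set.mem_insert_iff, Set.mem_singleton_iff]
      tauto
    · have hsplit : (q0.takeUntil z hz0).append
          (((q0.dropUntil z hz0).takeUntil y hydrop).append
            ((q0.dropUntil z hz0).dropUntil y hydrop)) = q0 := by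
        rw [Walk.take_spec, Walk.take_spec]
      exact arcs_of_split hadj hq0 _ _ _ hsplit (fun h => hyz h.symm)
        (fun h => hxz h.symm) (fun h => hxy h.symm) hed hsup hlen


/-- Core lemma: a short odd path between two nonadjacent attachments of `v` yields an
odd hole through `v`, so it cannot be shorter than `c` minus 2. -/
lemma shorter_hole {G : SimpleGraph V} {u : V} {c : G.Walk u u} (hc : IsShortestOddHole G c)
    {x z : V} {P : G.Walk x z} (hP : P.IsPath)
    (hPs : ∀ w ∈ P.support, w ∈ c.support)
    (hedgeP : ∀ a b : V, a ∈ P.support → b ∈ P.support → G.Adj a b → s(a, b) ∈ P.edges)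
    (hodd : Odd P.length) {v : V} (hvx : G.Adj v x) (hvz : G.Adj v z) (hvnc : v ∉ c.support)
    (hint : ∀ w ∈ P.support, G.Adj v w → w = x ∨ w = z) (hxz : ¬ G.Adj x z) :
    c.length ≤ P.length + 2 := by
  have hxzne : x ≠ z := by
    rintro rfl
    rw [Walk.isPath_iff_eq_nil.mp hP] at hodd
    simp [Nat.odd_iff] at hodd
  have hlen1 : P.length ≠ 1 := fun h => hxz (P.adj_of_length_eq_one h)
  have hlen3 : 3 ≤ P.length := by
    obtain ⟨k, hk⟩ := hodd
    omega
  have hvP : v ∉ P.support := fun h => hvnc (hPs v h)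
  set P' : G.Walk x v := P.append (Walk.cons hvz.symm Walk.nil) with hP'def
  set D : G.Walk v v := Walk.cons hvx P' with hDdef
  have hsuppP' : P'.support = P.support ++ [v] := by
    rw [hP'def, Walk.support_append]
    rfl
  have hP'path : P'.IsPath := by
    rw [Walk.isPath_def, hsuppP']
    rw [List.nodup_append']
    refine ⟨hP.support_nodup, List.nodup_singleton v, ?_⟩
    intro a ha hmem
    rw [List.mem_singleton] at hmem
    subst hmem
    exact hvP ha
  have hedgesP' : P'.edges = P.edges ++ [s(z, v)] := by
    rw [hP'def, Walk.edges_append]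
    rfl
  have hDcyc : D.IsCycle := by
    rw [hDdef]
    refine (Walk.cons_isCycle_iff P' hvx).mpr ⟨hP'path, ?_⟩
    rw [hedgesP', List.mem_append, List.mem_singleton]
    rintro (h | h)
    · exact hvP (P.fst_mem_support_of_mem_edges h)
    · rcases Sym2.eq_iff.mp h with ⟨h1, -⟩ | ⟨-, h2⟩
      · exact hvz.ne h1
      · exact hxzne h2
  have hDlen : D.length = P.length + 2 := by
    rw [hDdef, Walk.length_cons, hP'def, Walk.length_append]
    simp
  have hDsup : D.support = v :: (P.support ++ [v]) := by
    rw [hDdef, Walk.support_cons, hsuppP']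
  have hDedges : D.edges = s(v, x) :: (P.edges ++ [s(z, v)]) := by
    rw [hDdef, Walk.edges_cons, hedgesP']
  have hmemD : ∀ w, w ∈ D.support → w = v ∨ w ∈ P.support := by
    intro w hw
    rw [hDsup, List.mem_cons, List.mem_append, List.mem_singleton] at hw
    tauto
  have hIndu : IsInducedWalk G D := by
    intro a b ha hb hab
    rw [adj_ts, hDedges, List.mem_cons, List.mem_append, List.mem_singleton]
    rcases hmemD a ha with rfl | haP
    · rcases hmemD b hb with rfl | hbP
      · exact absurd rfl hab.ne
      · rcases hint b hbP hab with rfl | rfl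
        · exact Or.inl rfl
        · exact Or.inr (Or.inr (Sym2.eq_swap))
    · rcases hmemD b hb with rfl | hbP
      · rcases hint a haP hab.symm with rfl | rfl
        · exact Or.inl Sym2.eq_swap
        · exact Or.inr (Or.inr rfl)
      · exact Or.inr (Or.inl (hedgeP a b haP hbP hab))
  have hOdd : IsOddHole G D := by
    refine ⟨⟨hDcyc, by omega, hIndu⟩, ?_⟩
    rw [hDlen]
    obtain ⟨k, hk⟩ := hodd
    exact ⟨k + 1, by omega⟩
  calc c.length ≤ D.length := hc.2 v D hOdd
    _ = P.length + 2 := hDlen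

/-- An arc of length one whose edges lie in `c` gives adjacency in `c.toSubgraph`. -/
lemma arc_one_adj {G : SimpleGraph V} {u a b : V} {c : G.Walk u u} {R : G.Walk a b}
    (h1 : R.length = 1) (hRedges : ∀ e ∈ R.edges, e ∈ c.edges) :
    c.toSubgraph.Adj a b := by
  have t := R.toSubgraph_adj_getVert (i := 0) (by omega)
  rw [R.getVert_zero] at t
  have hb : R.getVert 1 = b := by
    conv_lhs => rw [← h1]
    exact R.getVert_length
  rw [hb] at t
  exact adj_ts.mpr (hRedges _ (adj_ts.mp t))

/-- An arc of length at most two between the only two attachments of `v` contradicts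
`v` being `C`-major. -/
lemma short_arc_contra {G : SimpleGraph V} {u v a b : V} {c : G.Walk u u}
    (hv : CMajor G c v) (hab : a ≠ b) (hnadj : ¬ G.Adj a b) {R : G.Walk a b}
    (hR2 : R.length ≤ 2) (hRedges : ∀ e ∈ R.edges, e ∈ c.edges)
    (hall : ∀ w ∈ c.support, G.Adj v w → w = a ∨ w = b) : False := by
  have h0 : R.length ≠ 0 := fun h => hab (Walk.eq_of_length_eq_zero h)
  have h1 : R.length ≠ 1 := fun h => hnadj (R.adj_of_length_eq_one h)
  have h2 : R.length = 2 := by omega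
  have t1 := R.toSubgraph_adj_getVert (i := 0) (by omega)
  have t2 := R.toSubgraph_adj_getVert (i := 1) (by omega)
  rw [R.getVert_zero] at t1
  have hgl : R.getVert 2 = b := by
    conv_lhs => rw [← h2]
    exact R.getVert_length
  rw [hgl] at t2
  have c1 : c.toSubgraph.Adj a (R.getVert 1) := adj_ts.mpr (hRedges _ (adj_ts.mp t1))
  have c2 : c.toSubgraph.Adj (R.getVert 1) b := adj_ts.mpr (hRedges _ (adj_ts.mp t2))
  exact hv ⟨a, R.getVert 1, b, c1, c2, hab,
    fun w hw hA => (hall w hw hA).imp id Or.inr⟩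


/-- A `C`-major vertex cannot have exactly two attachments on `c`. -/
lemma two_attachments_contra {G : SimpleGraph V} {u : V} {c : G.Walk u u}
    (hc : IsShortestOddHole G c) {v : V} (hv : CMajor G c v) (hvnc : v ∉ c.support)
    {a b : V} (ha : a ∈ c.support) (hb : b ∈ c.support) (hab : a ≠ b)
    (hall : ∀ w ∈ c.support, G.Adj v w → w = a ∨ w = b)
    (hva : G.Adj v a) (hvb : G.Adj v b) : False := by
  obtain ⟨⟨⟨hcyc, hlen4, hind⟩, hoddc⟩, hmin⟩ := hc
  have hc' : IsShortestOddHole G c := ⟨⟨⟨hcyc, hlen4, hind⟩, hoddc⟩, hmin⟩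
  by_cases hadjab : G.Adj a b
  · obtain ⟨p, q, hpq, h1, h2, huniq⟩ := cycle_nbrs_eq hcyc ha
    have hts : c.toSubgraph.Adj a b := hind a b ha hb hadjab
    have hmap : ∀ t : V, ∀ w ∈ c.support, G.Adj v w → w = t ∨ w = a ∨ w = b := by
      intro t w hw hA
      exact Or.inr (hall w hw hA)
    rcases huniq b hts with rfl | rfl
    · exact hv ⟨q, a, b, h2.symm, hts, fun h => hpq h.symm, hmap q⟩
    · exact hv ⟨p, a, b, h1.symm, hts, hpq, hmap p⟩
  · obtain ⟨P, Q, hPp, hQp, hsum, hed, hsup, hintPQ⟩ := cycle_two_arcs hcyc ha hb hab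
    have hPs : ∀ w ∈ P.support, w ∈ c.support := fun w h => (hsup w).mpr (Or.inl h)
    have hQs : ∀ w ∈ Q.support, w ∈ c.support := fun w h => (hsup w).mpr (Or.inr h)
    have hedgeP : ∀ s t : V, s ∈ P.support → t ∈ P.support → G.Adj s t → s(s, t) ∈ P.edges := by
      intro s t hs ht hst
      have hce : s(s, t) ∈ c.edges := adj_ts.mp (hind s t (hPs s hs) (hPs t ht) hst)
      rcases (hed _).mp hce with h | h
      · exact h
      · have hsQ := Q.fst_mem_support_of_mem_edges h
        have htQ := Q.snd_mem_support_of_mem_edges h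
        rcases hintPQ s hs hsQ with rfl | rfl <;> rcases hintPQ t ht htQ with rfl | rfl
        · exact absurd rfl hst.ne
        · exact absurd hst hadjab
        · exact absurd hst.symm hadjab
        · exact absurd rfl hst.ne
    have hedgeQ : ∀ s t : V, s ∈ Q.support → t ∈ Q.support → G.Adj s t → s(s, t) ∈ Q.edges := by
      intro s t hs ht hst
      have hce : s(s, t) ∈ c.edges := adj_ts.mp (hind s t (hQs s hs) (hQs t ht) hst)
      rcases (hed _).mp hce with h | h
      · have hsP := P.fst_mem_support_of_mem_edges h
        have htP := P.snd_mem_support_of_mem_edges h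
        rcases hintPQ s hsP hs with rfl | rfl <;> rcases hintPQ t htP ht with rfl | rfl
        · exact absurd rfl hst.ne
        · exact absurd hst hadjab
        · exact absurd hst.symm hadjab
        · exact absurd rfl hst.ne
      · exact h
    have hparity : Odd P.length ∨ Odd Q.length := by
      rcases Nat.even_or_odd P.length with h | h
      · right
        rw [Nat.odd_iff] at hoddc ⊢
        rw [Nat.even_iff] at h
        omega
      · exact Or.inl h
    rcases hparity with hodd | hodd
    · have hle := shorter_hole hc' hPp hPs hedgeP hodd hva hvb hvnc
        (fun w hw hA => hall w (hPs w hw) hA) hadjab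
      exact short_arc_contra hv (fun h : b = a => hab h.symm) (fun h => hadjab h.symm)
        (R := Q) (by omega) (fun e he => (hed e).mpr (Or.inr he))
        (fun w hw hA => (hall w hw hA).elim Or.inr Or.inl)
    · have hle := shorter_hole hc' hQp hQs hedgeQ hodd hvb hva hvnc
        (fun w hw hA => (hall w (hQs w hw) hA).elim Or.inr Or.inl)
        (fun h => hadjab h.symm)
      exact short_arc_contra hv hab hadjab (R := P) (by omega)
        (fun e he => (hed e).mpr (Or.inl he)) hall

/-- If an arc between two of the three attachments is odd, its ends must be adjacent. -/
lemma odd_arc_contra {G : SimpleGraph V} {u v a b e3 : V} {c : G.Walk u u}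
    (hc : IsShortestOddHole G c) (hv : CMajor G c v) (hvnc : v ∉ c.support)
    {A : G.Walk a b} {B : G.Walk b e3} {C2 : G.Walk e3 a}
    (hA : A.IsPath)
    (hsum : A.length + B.length + C2.length = c.length)
    (hB1 : 1 ≤ B.length) (hC1 : 1 ≤ C2.length)
    (hed : ∀ e, e ∈ c.edges ↔ e ∈ A.edges ∨ e ∈ B.edges ∨ e ∈ C2.edges)
    (hsA : ∀ w ∈ A.support, w ∈ c.support)
    (hiAB : ∀ w, w ∈ A.support → w ∈ B.support → w = b)
    (hiCA : ∀ w, w ∈ A.support → w ∈ C2.support → w = a)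
    (hab : a ≠ b)
    (hva : G.Adj v a) (hvb : G.Adj v b)
    (hall : ∀ w ∈ c.support, G.Adj v w → w = a ∨ w = b ∨ w = e3)
    (hAodd : Odd A.length) (hnadj : ¬ G.Adj a b) : False := by
  have hind : IsInducedWalk G c := hc.1.1.2.2
  have hedgeA : ∀ s t : V, s ∈ A.support → t ∈ A.support → G.Adj s t → s(s, t) ∈ A.edges := by
    intro s t hs ht hst
    have hce : s(s, t) ∈ c.edges := adj_ts.mp (hind s t (hsA s hs) (hsA t ht) hst)
    rcases (hed _).mp hce with h | h | h
    · exact h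
    · have h1 := hiAB s hs (B.fst_mem_support_of_mem_edges h)
      have h2 := hiAB t ht (B.snd_mem_support_of_mem_edges h)
      exact absurd (h1.trans h2.symm) hst.ne
    · have h1 := hiCA s hs (C2.fst_mem_support_of_mem_edges h)
      have h2 := hiCA t ht (C2.snd_mem_support_of_mem_edges h)
      exact absurd (h1.trans h2.symm) hst.ne
  have hintA : ∀ w ∈ A.support, G.Adj v w → w = a ∨ w = b := by
    intro w hw hA'
    rcases hall w (hsA w hw) hA' with h | h | h
    · exact Or.inl h
    · exact Or.inr h
    · exact Or.inr (hiAB w hw (by rw [h]; exact Walk.end_mem_support B))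
  have hle := shorter_hole hc hA hsA hedgeA hAodd hva hvb hvnc hintA hnadj
  have hBlen : B.length = 1 := by omega
  have hClen : C2.length = 1 := by omega
  have cB : c.toSubgraph.Adj b e3 :=
    arc_one_adj hBlen (fun e he => (hed e).mpr (Or.inr (Or.inl he)))
  have cC : c.toSubgraph.Adj e3 a :=
    arc_one_adj hClen (fun e he => (hed e).mpr (Or.inr (Or.inr he)))
  exact hv ⟨b, e3, a, cB, cC, fun h => hab h.symm,
    fun w hw hA' => by
      rcases hall w hw hA' with h | h | h
      · exact Or.inr (Or.inr h)
      · exact Or.inl h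
      · exact Or.inr (Or.inl h)⟩


end Helpers

set_option maxHeartbeats 1600000 in
/-- a `C`-major vertex with at most three neighbours in `V(C)` (where `C` is
a shortest odd hole) has exactly three neighbours in `V(C)`, of which exactly one pair is
adjacent. -/
theorem cMajor_three_neighbours (G : SimpleGraph V) {u : V} (c : G.Walk u u)
    (hc : IsShortestOddHole G c) (v : V) (hv : CMajor G c v)
    (h3 : ({w | w ∈ c.support ∧ G.Adj v w}).ncard ≤ 3) :
    ∃ x y z : V, x ≠ y ∧ x ≠ z ∧ y ≠ z ∧
      {w | w ∈ c.support ∧ G.Adj v w} = {x, y, z} ∧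
      G.Adj x y ∧ ¬ G.Adj x z ∧ ¬ G.Adj y z := by
  classical
  have hcyc : c.IsCycle := hc.1.1.1
  have hlen4 : 4 ≤ c.length := hc.1.1.2.1
  have hind : IsInducedWalk G c := hc.1.1.2.2
  have hoddc : Odd c.length := hc.1.2
  have hoddm : c.length % 2 = 1 := Nat.odd_iff.mp hoddc
  set N := {w | w ∈ c.support ∧ G.Adj v w} with hNdef
  have hNfin : N.Finite := Set.Finite.subset c.support.finite_toSet (fun w hw => hw.1)
  have hvnc : v ∉ c.support := by
    intro hvc
    obtain ⟨p, q, hpq, h1, h2, huniq⟩ := cycle_nbrs_eq hcyc hvc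
    refine hv ⟨p, v, q, h1.symm, h2, hpq, fun w hw hA => ?_⟩
    rcases huniq w (hind v w hvc hw hA) with rfl | rfl
    · exact Or.inl rfl
    · exact Or.inr (Or.inr rfl)
  have h3le : 3 ≤ N.ncard := by
    by_contra hlt
    push_neg at hlt
    have hcases : N.ncard = 0 ∨ N.ncard = 1 ∨ N.ncard = 2 := by omega
    rcases hcases with h | h | h
    · rw [Set.ncard_eq_zero hNfin] at h
      obtain ⟨p, q, hpq, h1, h2, -⟩ := cycle_nbrs_eq hcyc c.start_mem_support
      refine hv ⟨p, u, q, h1.symm, h2, hpq, fun w hw hA => ?_⟩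
      exact absurd (show w ∈ N from ⟨hw, hA⟩) (by rw [h]; simp)
    · obtain ⟨a, hN1⟩ := Set.ncard_eq_one.mp h
      have haN : a ∈ N := by rw [hN1]; exact rfl
      obtain ⟨haS, haA⟩ := haN
      obtain ⟨p, q, hpq, h1, h2, -⟩ := cycle_nbrs_eq hcyc haS
      refine hv ⟨p, a, q, h1.symm, h2, hpq, fun w hw hA => ?_⟩
      have hwN : w ∈ N := ⟨hw, hA⟩
      rw [hN1] at hwN
      exact Or.inr (Or.inl hwN)
    · obtain ⟨a, b, hab, hN2⟩ := Set.ncard_eq_two.mp h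
      have haN : a ∈ N := by rw [hN2]; exact Set.mem_insert _ _
      have hbN : b ∈ N := by rw [hN2]; exact Set.mem_insert_of_mem _ rfl
      obtain ⟨haS, haA⟩ := haN
      obtain ⟨hbS, hbA⟩ := hbN
      refine two_attachments_contra hc hv hvnc haS hbS hab (fun w hw hA => ?_) haA hbA
      have hwN : w ∈ N := ⟨hw, hA⟩
      rw [hN2] at hwN
      simpa using hwN
  have hN3 : N.ncard = 3 := le_antisymm h3 h3le
  obtain ⟨x0, y0, z0, hxy0, hxz0, hyz0, hNeq⟩ := Set.ncard_eq_three.mp hN3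
  have hx0 : x0 ∈ N := by rw [hNeq]; simp
  have hy0 : y0 ∈ N := by rw [hNeq]; simp
  have hz0 : z0 ∈ N := by rw [hNeq]; simp
  obtain ⟨hx0S, hx0A⟩ := hx0
  obtain ⟨hy0S, hy0A⟩ := hy0
  obtain ⟨hz0S, hz0A⟩ := hz0
  obtain ⟨q, r, hset, hxq, hxr, hqr, A1, A2, A3, hA1p, hA2p, hA3p, hsum, h1l, h2l, h3l,
    hed, hs1, hs2, hs3, hi12, hi23, hi13⟩ :=
    cycle_three_arcs hcyc hx0S hy0S hz0S hxy0 hxz0 hyz0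
  have hNpqr : N = {x0, q, r} := by rw [hNeq, ← hset]
  have hqN : q ∈ N := by rw [hNpqr]; simp
  have hrN : r ∈ N := by rw [hNpqr]; simp
  obtain ⟨hqS, hqA⟩ := hqN
  obtain ⟨hrS, hrA⟩ := hrN
  have hall : ∀ w ∈ c.support, G.Adj v w → w = x0 ∨ w = q ∨ w = r := by
    intro w hw hA
    have hwN : w ∈ N := ⟨hw, hA⟩
    rw [hNpqr] at hwN
    simpa using hwN
  -- odd arc forces adjacency of its ends
  have o1 : Odd A1.length → G.Adj x0 q := by
    intro hodd
    by_contra hnadj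
    exact odd_arc_contra hc hv hvnc hA1p hsum h2l h3l hed hs1 hi12 hi13 hxq hx0A hqA
      hall hodd hnadj
  have hsum2 : A2.length + A3.length + A1.length = c.length := by omega
  have hsum3 : A3.length + A1.length + A2.length = c.length := by omega
  have hed2 : ∀ e, e ∈ c.edges ↔ e ∈ A2.edges ∨ e ∈ A3.edges ∨ e ∈ A1.edges := by
    intro e
    rw [hed e]
    tauto
  have hed3 : ∀ e, e ∈ c.edges ↔ e ∈ A3.edges ∨ e ∈ A1.edges ∨ e ∈ A2.edges := by
    intro e
    rw [hed e]
    tauto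
  have o2 : Odd A2.length → G.Adj q r := by
    intro hodd
    by_contra hnadj
    refine odd_arc_contra (B := A3) (C2 := A1) hc hv hvnc hA2p hsum2 h3l h1l
      hed2 hs2 hi23 (fun w hw2 hw1 => hi12 w hw1 hw2) hqr hqA hrA
      (fun w hw hA => ?_) hodd hnadj
    rcases hall w hw hA with h | h | h
    · exact Or.inr (Or.inr h)
    · exact Or.inl h
    · exact Or.inr (Or.inl h)
  have o3 : Odd A3.length → G.Adj r x0 := by
    intro hodd
    by_contra hnadj
    refine odd_arc_contra (B := A1) (C2 := A2) hc hv hvnc hA3p hsum3 h1l h2l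
      hed3 hs3 (fun w hw3 hw1 => hi13 w hw1 hw3)
      (fun w hw3 hw2 => hi23 w hw2 hw3) (fun h => hxr h.symm) hrA hx0A
      (fun w hw hA => ?_) hodd hnadj
    rcases hall w hw hA with h | h | h
    · exact Or.inr (Or.inl h)
    · exact Or.inr (Or.inr h)
    · exact Or.inl h
  -- adjacency of ends forces arc of length one
  have e1 : G.Adj x0 q → A1.length = 1 := by
    intro hadj
    have hce : s(x0, q) ∈ c.edges := adj_ts.mp (hind _ _ hx0S hqS hadj)
    rcases (hed _).mp hce with h | h | h
    · exact path_edge_end hA1p h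
    · exact absurd (hi12 x0 A1.start_mem_support (A2.fst_mem_support_of_mem_edges h)) hxq
    · exact absurd (hi13 q A1.end_mem_support (A3.snd_mem_support_of_mem_edges h))
        (fun h' => hxq h'.symm)
  have e2 : G.Adj q r → A2.length = 1 := by
    intro hadj
    have hce : s(q, r) ∈ c.edges := adj_ts.mp (hind _ _ hqS hrS hadj)
    rcases (hed _).mp hce with h | h | h
    · exact absurd (hi13 r (A1.snd_mem_support_of_mem_edges h) A3.start_mem_support)
        (fun h' => hxr h'.symm)
    · exact path_edge_end hA2p h
    · exact absurd (hi23 q A2.start_mem_support (A3.fst_mem_support_of_mem_edges h)) hqr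
  have e3a : G.Adj r x0 → A3.length = 1 := by
    intro hadj
    have hce : s(r, x0) ∈ c.edges := adj_ts.mp (hind _ _ hrS hx0S hadj)
    rcases (hed _).mp hce with h | h | h
    · exact absurd (hi13 r (A1.fst_mem_support_of_mem_edges h) A3.start_mem_support)
        (fun h' => hxr h'.symm)
    · exact absurd (hi12 x0 A1.start_mem_support (A2.snd_mem_support_of_mem_edges h)) hxq
    · exact path_edge_end hA3p h
  have htri : Odd A1.length ∨ Odd A2.length ∨ Odd A3.length := by
    rcases Nat.even_or_odd A1.length with h1 | h1
    · rcases Nat.even_or_odd A2.length with h2 | h2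
      · refine Or.inr (Or.inr (Nat.odd_iff.mpr ?_))
        rw [Nat.even_iff] at h1 h2
        omega
      · exact Or.inr (Or.inl h2)
    · exact Or.inl h1
  rcases htri with hodd | hodd | hodd
  · have ha1 : A1.length = 1 := e1 (o1 hodd)
    have hev2 : ¬ Odd A2.length := by
      intro h2
      have hb1 : A2.length = 1 := e2 (o2 h2)
      have h3odd : Odd A3.length := Nat.odd_iff.mpr (by omega)
      have hc1 : A3.length = 1 := e3a (o3 h3odd)
      omega
    have hev3 : ¬ Odd A3.length := by
      intro h3'
      have hb1 : A3.length = 1 := e3a (o3 h3')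
      have h2odd : Odd A2.length := Nat.odd_iff.mpr (by omega)
      have hc1 : A2.length = 1 := e2 (o2 h2odd)
      omega
    refine ⟨x0, q, r, hxq, hxr, hqr, by rw [hNpqr], Walk.adj_of_length_eq_one (e1 (o1 hodd)), ?_, ?_⟩
    · intro h
      exact hev3 (by rw [e3a h.symm]; exact odd_one)
    · intro h
      exact hev2 (by rw [e2 h]; exact odd_one)
  · have ha1 : A2.length = 1 := e2 (o2 hodd)
    have hev1 : ¬ Odd A1.length := by
      intro h1
      have hb1 : A1.length = 1 := e1 (o1 h1)
      have h3odd : Odd A3.length := Nat.odd_iff.mpr (by omega)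
      have hc1 : A3.length = 1 := e3a (o3 h3odd)
      omega
    have hev3 : ¬ Odd A3.length := by
      intro h3'
      have hb1 : A3.length = 1 := e3a (o3 h3')
      have h1odd : Odd A1.length := Nat.odd_iff.mpr (by omega)
      have hc1 : A1.length = 1 := e1 (o1 h1odd)
      omega
    refine ⟨q, r, x0, hqr, fun h => hxq h.symm, fun h => hxr h.symm, ?_,
      Walk.adj_of_length_eq_one ha1, ?_, ?_⟩
    · rw [hNpqr]
      ext w
      simp only [Set.mem_insert_iff, Set.mem_singleton_iff]
      tauto
    · intro h
      exact hev1 (by rw [e1 h.symm]; exact odd_one)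
    · intro h
      exact hev3 (by rw [e3a h]; exact odd_one)
  · have ha1 : A3.length = 1 := e3a (o3 hodd)
    have hev1 : ¬ Odd A1.length := by
      intro h1
      have hb1 : A1.length = 1 := e1 (o1 h1)
      have h2odd : Odd A2.length := Nat.odd_iff.mpr (by omega)
      have hc1 : A2.length = 1 := e2 (o2 h2odd)
      omega
    have hev2 : ¬ Odd A2.length := by
      intro h2
      have hb1 : A2.length = 1 := e2 (o2 h2)
      have h1odd : Odd A1.length := Nat.odd_iff.mpr (by omega)
      have hc1 : A1.length = 1 := e1 (o1 h1odd)
      omega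
    refine ⟨r, x0, q, fun h => hxr h.symm, fun h => hqr h.symm, hxq, ?_,
      Walk.adj_of_length_eq_one ha1, ?_, ?_⟩
    · rw [hNpqr]
      ext w
      simp only [Set.mem_insert_iff, Set.mem_singleton_iff]
      tauto
    · intro h
      exact hev2 (by rw [e2 h.symm]; exact odd_one)
    · intro h
      exact hev1 (by rw [e1 h]; exact odd_one)


end SOH
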